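/- Let n, m ≥ 1, let W ∈ ℝ^{n×m} be an assignment matrix, let K_uu be an invertible symmetric m×m real matrix, let K_fu be an n×m real matrix, let K_ff be a symmetric n×n real matrix, and let β, γ ≥ 0. Suppose that every entry of K_ff − W K_uu Wᵀ has absolute value at most β, every entry of K_fu − W K_uu has absolute value at most β, and every entry of W − K_fu K_uu^{−1} has absolute value at most γ. Then every eigenvalue λ of the symmetric matrix K_ff − K_fu K_uu^{−1} K_fuᵀ satisfies |λ| ≤ n(3β + mβγ). -/
import Mathlib


open Matrix

/-- An assignment matrix: each row has exactly one entry equal to `1`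
and all other entries equal to `0`. -/
def IsAssignmentMatrix {n m : ℕ} (W : Matrix (Fin n) (Fin m) ℝ) : Prop :=
  ∀ i, ∃ j, W i j = 1 ∧ ∀ j', j' ≠ j → W i j' = 0

/-- every eigenvalue `μ` of the symmetric matrix `K_ff − K_fu K_uu⁻¹ K_fuᵀ`
satisfies `|μ| ≤ n (3β + mβγ)`. -/
theorem stmt_7 (n m : ℕ) (hn : 1 ≤ n) (hm : 1 ≤ m)
    (W : Matrix (Fin n) (Fin m) ℝ) (hW : IsAssignmentMatrix W)
    (K_uu : Matrix (Fin m) (Fin m) ℝ) (hKuu : IsUnit K_uu.det) (hKuuSymm : K_uu.IsSymm)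
    (K_fu : Matrix (Fin n) (Fin m) ℝ)
    (K_ff : Matrix (Fin n) (Fin n) ℝ) (hKffSymm : K_ff.IsSymm)
    (β γ : ℝ) (hβ : 0 ≤ β) (hγ : 0 ≤ γ)
    (h1 : ∀ i i', |(K_ff - W * K_uu * Wᵀ) i i'| ≤ β)
    (h2 : ∀ i j, |(K_fu - W * K_uu) i j| ≤ β)
    (h3 : ∀ i j, |(W - K_fu * K_uu⁻¹) i j| ≤ γ) :
    ∀ (μ : ℝ) (v : Fin n → ℝ), v ≠ 0 →
      (K_ff - K_fu * K_uu⁻¹ * K_fuᵀ).mulVec v = μ • v →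
      |μ| ≤ n * (3 * β + m * β * γ) := by
  intro μ v hv hev
  set A := K_ff - W * K_uu * Wᵀ with hA
  set B := K_fu - W * K_uu with hB
  set C := W - K_fu * K_uu⁻¹ with hC
  set X := K_fu * K_uu⁻¹ with hXdef
  have hX : X * K_uu = K_fu := Matrix.nonsing_inv_mul_cancel_right _ _ hKuu
  have hBt : Bᵀ = K_fuᵀ - K_uu * Wᵀ := by
    rw [hB, transpose_sub, transpose_mul, hKuuSymm.eq]
  have hEeq : K_ff - K_fu * K_uu⁻¹ * K_fuᵀ = A - W * Bᵀ - B * Wᵀ + C * Bᵀ := by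
    have key : A - W * Bᵀ - B * Wᵀ + C * Bᵀ
        = K_ff - X * K_fuᵀ + (X * (K_uu * Wᵀ) - K_fu * Wᵀ) := by
      rw [hBt, hA, hB, hC]
      simp only [Matrix.sub_mul, Matrix.mul_sub, Matrix.mul_assoc]
      abel
    rw [key, ← Matrix.mul_assoc X, hX, sub_self, add_zero]
  -- entrywise bound
  have hEntry : ∀ i i', |(K_ff - K_fu * K_uu⁻¹ * K_fuᵀ) i i'| ≤ 3 * β + m * β * γ := by
    intro i i'
    rw [hEeq]
    have hWB : |(W * Bᵀ) i i'| ≤ β := by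
      obtain ⟨j₀, hj1, hj0⟩ := hW i
      have : (W * Bᵀ) i i' = B i' j₀ := by
        rw [Matrix.mul_apply]
        rw [Finset.sum_eq_single j₀]
        · simp [hj1, Matrix.transpose_apply]
        · intro j _ hj; simp [hj0 j hj]
        · simp
      rw [this]; exact h2 i' j₀
    have hBW : |(B * Wᵀ) i i'| ≤ β := by
      obtain ⟨j₀, hj1, hj0⟩ := hW i'
      have : (B * Wᵀ) i i' = B i j₀ := by
        rw [Matrix.mul_apply]
        rw [Finset.sum_eq_single j₀]
        · simp [hj1, Matrix.transpose_apply]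
        · intro j _ hj; simp [Matrix.transpose_apply, hj0 j hj]
        · simp
      rw [this]; exact h2 i j₀
    have hCB : |(C * Bᵀ) i i'| ≤ m * β * γ := by
      rw [Matrix.mul_apply]
      calc |∑ j, C i j * Bᵀ j i'| ≤ ∑ j, |C i j * Bᵀ j i'| :=
            Finset.abs_sum_le_sum_abs _ _
        _ ≤ ∑ _j : Fin m, γ * β := by
            apply Finset.sum_le_sum
            intro j _
            rw [abs_mul]
            exact mul_le_mul (h3 i j) (h2 i' j) (abs_nonneg _) hγ
        _ = m * β * γ := by simp [Finset.sum_const, Finset.card_univ]; ring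
    have := h1 i i'
    calc |(A - W * Bᵀ - B * Wᵀ + C * Bᵀ) i i'|
        = |A i i' - (W * Bᵀ) i i' - (B * Wᵀ) i i' + (C * Bᵀ) i i'| := by
          simp [Matrix.sub_apply, Matrix.add_apply]
      _ ≤ |A i i'| + |(W * Bᵀ) i i'| + |(B * Wᵀ) i i'| + |(C * Bᵀ) i i'| := by
          calc |A i i' - (W * Bᵀ) i i' - (B * Wᵀ) i i' + (C * Bᵀ) i i'|
              ≤ |A i i' - (W * Bᵀ) i i' - (B * Wᵀ) i i'| + |(C * Bᵀ) i i'| := abs_add_le _ _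
            _ ≤ |A i i' - (W * Bᵀ) i i'| + |(B * Wᵀ) i i'| + |(C * Bᵀ) i i'| := by
                gcongr; exact abs_sub _ _
            _ ≤ |A i i'| + |(W * Bᵀ) i i'| + |(B * Wᵀ) i i'| + |(C * Bᵀ) i i'| := by
                gcongr; exact abs_sub _ _
      _ ≤ β + β + β + m * β * γ := by gcongr
      _ = 3 * β + m * β * γ := by ring
  -- eigenvalue argument
  haveI : NeZero n := ⟨by omega⟩
  obtain ⟨i, -, hi⟩ := Finset.exists_max_image Finset.univ (fun k => |v k|)
    Finset.univ_nonempty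
  have hvi : 0 < |v i| := by
    obtain ⟨k, hk⟩ := Function.ne_iff.mp hv
    have : 0 < |v k| := abs_pos.mpr hk
    exact lt_of_lt_of_le this (hi k (Finset.mem_univ k))
  have heq : ∑ j, (K_ff - K_fu * K_uu⁻¹ * K_fuᵀ) i j * v j = μ * v i := by
    have := congrFun hev i
    simpa [Matrix.mulVec, dotProduct] using this
  have hbound : |μ| * |v i| ≤ (n * (3 * β + m * β * γ)) * |v i| := by
    calc |μ| * |v i| = |μ * v i| := (abs_mul _ _).symm
      _ = |∑ j, (K_ff - K_fu * K_uu⁻¹ * K_fuᵀ) i j * v j| := by rw [heq]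
      _ ≤ ∑ j, |(K_ff - K_fu * K_uu⁻¹ * K_fuᵀ) i j * v j| := Finset.abs_sum_le_sum_abs _ _
      _ ≤ ∑ _j : Fin n, (3 * β + m * β * γ) * |v i| := by
          apply Finset.sum_le_sum
          intro j _
          rw [abs_mul]
          have h0 : 0 ≤ 3 * β + m * β * γ := by positivity
          exact mul_le_mul (hEntry i j) (hi j (Finset.mem_univ j)) (abs_nonneg _) h0
      _ = (n * (3 * β + m * β * γ)) * |v i| := by simp [Finset.sum_const, Finset.card_univ]; ring
  exact le_of_mul_le_mul_right hbound hvi
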